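/- If c : S → T_k is a subsequence-free permutation code, with a_l codewords in T_k^l, then P_c = ∑_{l=1}^k a_l / (C(k,l)·l!) ≤ 1. -/

import Mathlib

open scoped List

/-- The number of full permutations of `Fin k` (as nodup lists of length `k`) having a
given nodup list `σ` as a prefix is `(k - σ.length)!`. -/
private lemma card_prefix_perms {k : ℕ} (σ : List (Fin k)) (hnd : σ.Nodup) :
    (((List.finRange k).permutations.toFinset).filter (fun π => σ <+: π)).card
      = (k - σ.length).factorial := by
  classical
  set Lc : List (Fin k) := (List.finRange k).filter (fun x => !decide (x ∈ σ)) with hLc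
  have hLcnd : Lc.Nodup := (List.nodup_finRange k).filter _
  have h1 : (List.finRange k).filter (fun x => decide (x ∈ σ)) ~ σ := by
    apply List.perm_of_nodup_nodup_toFinset_eq ((List.nodup_finRange k).filter _) hnd
    ext x; simp [List.mem_filter]
  have hperm : σ ++ Lc ~ List.finRange k := by
    calc σ ++ Lc ~ (List.finRange k).filter (fun x => decide (x ∈ σ)) ++ Lc :=
          (h1.symm.append_right _)
      _ ~ List.finRange k := List.filter_append_perm _ _
  have hLclen : σ.length + Lc.length = k := by
    have := hperm.length_eq
    simpa using this
  have key : ∀ (π : List (Fin k)), π ~ List.finRange k → σ <+: π →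
      π.drop σ.length ~ Lc := by
    intro π hπ hpre
    obtain ⟨t, rfl⟩ := hpre
    rw [List.drop_left]
    have hnd' : (σ ++ t).Nodup := hπ.nodup_iff.mpr (List.nodup_finRange k)
    have hdisj : σ.Disjoint t := (List.nodup_append'.mp hnd').2.2
    have ht : (σ ++ t).filter (fun x => !decide (x ∈ σ)) = t := by
      rw [List.filter_append]
      have h2 : σ.filter (fun x => !decide (x ∈ σ)) = [] := by
        rw [List.filter_eq_nil_iff]; intro a ha; simp [ha]
      have h3 : t.filter (fun x => !decide (x ∈ σ)) = t := by
        rw [List.filter_eq_self]; intro a ha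
        simp only [Bool.not_eq_true', decide_eq_false_iff_not]
        exact fun hmem => hdisj hmem ha
      rw [h2, h3, List.nil_append]
    calc t = (σ ++ t).filter (fun x => !decide (x ∈ σ)) := ht.symm
      _ ~ Lc := hπ.filter _
  rw [show (k - σ.length).factorial = Lc.length.factorial by
        congr 1; omega]
  rw [← List.length_permutations, ← List.toFinset_card_of_nodup
        (List.nodup_permutations _ hLcnd)]
  apply Finset.card_bij' (fun π _ => π.drop σ.length) (fun τ _ => σ ++ τ)
  · intro π hπ
    rw [Finset.mem_filter, List.mem_toFinset, List.mem_permutations] at hπ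
    rw [List.mem_toFinset, List.mem_permutations]
    exact key π hπ.1 hπ.2
  · intro τ hτ
    rw [List.mem_toFinset, List.mem_permutations] at hτ
    rw [Finset.mem_filter, List.mem_toFinset, List.mem_permutations]
    exact ⟨((hτ.append_left σ).trans hperm), ⟨τ, rfl⟩⟩
  · intro π hπ
    rw [Finset.mem_filter] at hπ
    obtain ⟨t, rfl⟩ := hπ.2
    rw [List.drop_left]
  · intro τ _
    rw [List.drop_left]

/-- **Kraft-type inequality for subsequence-free permutation codes** `c : S → T_k`:
`P_c = ∑_{l=1}^k a_l / (C(k,l)·l!) ≤ 1`. -/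
theorem permutation_constant_le_one_subsequence_free
    {S : Type*} [Fintype S] (k : ℕ) (c : S → List (Fin k))
    (hcode : ∀ s, (c s).Nodup ∧ 1 ≤ (c s).length ∧ (c s).length ≤ k)
    (hinj : Function.Injective c)
    (hfree : ∀ s t : S, (c s).Sublist (c t) → c s = c t)
    (a : ℕ → ℕ) (ha : ∀ l, a l = Nat.card {s : S // (c s).length = l}) :
    ∑ l ∈ Finset.Icc 1 k, (a l : ℝ) / (k.choose l * l.factorial) ≤ 1 := by
  classical
  set L : Finset (List (Fin k)) := (List.finRange k).permutations.toFinset with hL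
  have hLcard : L.card = k.factorial := by
    rw [hL, List.toFinset_card_of_nodup (List.nodup_permutations _ (List.nodup_finRange k)),
      List.length_permutations, List.length_finRange]
  set B : S → Finset (List (Fin k)) := fun s => L.filter (fun π => c s <+: π) with hB
  have hBcard : ∀ s, (B s).card = (k - (c s).length).factorial := fun s =>
    card_prefix_perms (c s) (hcode s).1
  -- the sets `B s` are pairwise disjoint
  have hdisj : ∀ s ∈ (Finset.univ : Finset S), ∀ t ∈ (Finset.univ : Finset S),
      s ≠ t → Disjoint (B s) (B t) := by
    intro s _ t _ hst
    refine Finset.disjoint_left.mpr fun π hπs hπt => hst ?_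
    rw [hB, Finset.mem_filter] at hπs hπt
    apply hinj
    rcases List.prefix_or_prefix_of_prefix hπs.2 hπt.2 with h | h
    · exact hfree s t h.sublist
    · exact (hfree t s h.sublist).symm
  -- counting: the union of the `B s` lies in `L`
  have hsum : ∑ s : S, (k - (c s).length).factorial ≤ k.factorial := by
    calc ∑ s : S, (k - (c s).length).factorial
        = ∑ s : S, (B s).card := by
          exact Finset.sum_congr rfl fun s _ => (hBcard s).symm
      _ = (Finset.univ.biUnion B).card := (Finset.card_biUnion hdisj).symm
      _ ≤ L.card := Finset.card_le_card (Finset.biUnion_subset.mpr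
            (fun s _ => Finset.filter_subset _ _))
      _ = k.factorial := hLcard
  -- group the sum over codewords by length
  have hfib : ∑ l ∈ Finset.Icc 1 k, a l * (k - l).factorial ≤ k.factorial := by
    have hmaps : ∀ s ∈ (Finset.univ : Finset S), (c s).length ∈ Finset.Icc 1 k :=
      fun s _ => Finset.mem_Icc.mpr ⟨(hcode s).2.1, (hcode s).2.2⟩
    have hfw := Finset.sum_fiberwise_of_maps_to hmaps
      (fun s => (k - (c s).length).factorial)
    calc ∑ l ∈ Finset.Icc 1 k, a l * (k - l).factorial
        = ∑ l ∈ Finset.Icc 1 k, ∑ s ∈ Finset.univ.filter (fun s => (c s).length = l),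
            (k - (c s).length).factorial := by
          refine Finset.sum_congr rfl fun l _ => ?_
          rw [Finset.sum_congr rfl (fun s hs => by rw [(Finset.mem_filter.mp hs).2]),
            Finset.sum_const, smul_eq_mul, ha l, Nat.card_eq_fintype_card,
            Fintype.card_subtype]
      _ = ∑ s : S, (k - (c s).length).factorial := hfw
      _ ≤ k.factorial := hsum
  -- pass to the reals
  have hkpos : (0 : ℝ) < (k.factorial : ℝ) := by
    exact_mod_cast k.factorial_pos
  have hterm : ∀ l ∈ Finset.Icc 1 k,
      (a l : ℝ) / (k.choose l * l.factorial) = (a l * (k - l).factorial : ℕ) / k.factorial := by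
    intro l hl
    have hlk : l ≤ k := (Finset.mem_Icc.mp hl).2
    have hid : (k.choose l * l.factorial * (k - l).factorial : ℕ) = k.factorial :=
      Nat.choose_mul_factorial_mul_factorial hlk
    have hden : (0 : ℝ) < (k.choose l * l.factorial : ℝ) := by
      have h1 : 0 < k.choose l := Nat.choose_pos hlk
      have h2 : 0 < l.factorial := l.factorial_pos
      positivity
    rw [div_eq_div_iff hden.ne' hkpos.ne']
    push_cast [← hid]
    ring
  calc ∑ l ∈ Finset.Icc 1 k, (a l : ℝ) / (k.choose l * l.factorial)
      = ∑ l ∈ Finset.Icc 1 k, ((a l * (k - l).factorial : ℕ) : ℝ) / k.factorial :=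
        Finset.sum_congr rfl hterm
    _ = ((∑ l ∈ Finset.Icc 1 k, a l * (k - l).factorial : ℕ) : ℝ) / k.factorial := by
        rw [← Finset.sum_div, Nat.cast_sum]
    _ ≤ 1 := by
        rw [div_le_one hkpos]
        exact_mod_cast hfib
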